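/- Assume n is even, n ≥ 2, a = −c and c ≠ 0. Then: (i) f(f(X)) = 0 for every X ∈ F_{q^2}; (ii) {X ∈ F_{q^2} : f(X) = 0} = {X : X^q = X}, which is the subfield F_q and has exactly q elements; (iii) there are exactly (q−1)/𝔤(n) nonzero elements α ∈ F_{q^2} with f^{-1}(α) nonempty, and for each such α one has #f^{-1}(α) = q·𝔤(n). -/

import Mathlib

open Polynomial in
lemma aux_root_card_le (F : Type*) [Field F] [Fintype F] (m : ℕ) (hm : 2 ≤ m) (u : F) :
    {x : F | x ^ m = u * x}.ncard ≤ m := by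
  classical
  set P : F[X] := X ^ m - C u * X with hP
  have hco : P.coeff m = 1 := by
    simp [hP, coeff_X, Polynomial.coeff_X_pow]
    omega
  have hne : P ≠ 0 := fun h => by simp [h] at hco
  have hdeg : P.natDegree ≤ m := by
    refine le_trans (Polynomial.natDegree_sub_le _ _) ?_
    simp only [Polynomial.natDegree_X_pow, max_le_iff, le_refl, true_and]
    refine le_trans (Polynomial.natDegree_mul_le) ?_
    simp only [Polynomial.natDegree_C, Polynomial.natDegree_X]
    omega
  have hsub : {x : F | x ^ m = u * x} ⊆ ↑P.roots.toFinset := by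
    intro x hx
    simp only [Set.mem_setOf_eq] at hx
    rw [Finset.mem_coe, Multiset.mem_toFinset, mem_roots hne]
    simp [IsRoot, hP, hx]
  calc {x : F | x ^ m = u * x}.ncard ≤ (↑P.roots.toFinset : Set F).ncard :=
        Set.ncard_le_ncard hsub (Set.toFinite _)
    _ = P.roots.toFinset.card := Set.ncard_coe_finset _
    _ ≤ Multiset.card P.roots := Multiset.toFinset_card_le _
    _ ≤ P.natDegree := P.card_roots'
    _ ≤ m := hdeg

open Polynomial in
lemma aux_nthroots_card (F : Type*) [Field F] [Fintype F] (m : ℕ) (hm : 0 < m)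
    (hdvd : m ∣ Fintype.card F - 1) : {x : F | x ^ m = 1}.ncard = m := by
  classical
  obtain ⟨g, hg⟩ := IsCyclic.exists_generator (α := Fˣ)
  have horder : orderOf (g : F) = Fintype.card F - 1 := by
    rw [orderOf_units, orderOf_eq_card_of_forall_mem_zpowers hg, Nat.card_eq_fintype_card, Fintype.card_units]
  have hN : 0 < Fintype.card F - 1 := by
    have := Fintype.one_lt_card (α := F)
    omega
  have hprim : IsPrimitiveRoot (g : F) (Fintype.card F - 1) := by
    rw [← horder]; exact IsPrimitiveRoot.orderOf _
  obtain ⟨k, hk⟩ := hdvd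
  have hprim' : IsPrimitiveRoot ((g : F) ^ k) m :=
    hprim.pow hN (by rw [hk, mul_comm])
  have hset : {x : F | x ^ m = 1} = ↑(nthRootsFinset m (1 : F)) := by
    ext x; simp [Polynomial.mem_nthRootsFinset hm (1 : F)]
  rw [hset, Set.ncard_coe_finset, hprim'.card_nthRootsFinset]

/-- `n` even, `n ≥ 2`, `a = -c`, `c ≠ 0`. Then (i) `f ∘ f ≡ 0`;
(ii) the zero set of `f` is the subfield `F_q = {X : X^q = X}`, with `q` elements;
(iii) there are exactly `(q-1)/𝔤(n)` nonzero `α` with nonempty preimage, each of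
size `q·𝔤(n)`. -/
theorem stmt_1 (p s q : ℕ) (hp : p.Prime) (hpodd : p ≠ 2) (hs : 0 < s) (hq : q = p ^ s)
    (F : Type*) [Field F] [Fintype F] (hF : Fintype.card F = q ^ 2)
    (a c : F) (ha : a ^ q = a) (hc : c ^ q = c)
    (n : ℕ) (hn2 : 2 ≤ n) (hneven : Even n)
    (hac : a = -c) (hc0 : c ≠ 0)
    (f : F → F) (hf : ∀ X, f X = (c * X ^ q + a * X) * (X ^ q - X) ^ (n - 1)) :
    (∀ X : F, f (f X) = 0) ∧
    ({X : F | f X = 0} = {X : F | X ^ q = X} ∧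
      {X : F | f X = 0}.ncard = q) ∧
    ({α : F | α ≠ 0 ∧ (f ⁻¹' {α}).Nonempty}.ncard = (q - 1) / Nat.gcd n (q - 1) ∧
      ∀ α : F, α ≠ 0 → (f ⁻¹' {α}).Nonempty →
        (f ⁻¹' {α}).ncard = q * Nat.gcd n (q - 1)) := by
  classical
  -- numerics
  have hq3 : 3 ≤ q := by
    have hp3 : 3 ≤ p := by have := hp.two_le; omega
    calc 3 ≤ p := hp3
      _ = p ^ 1 := (pow_one p).symm
      _ ≤ p ^ s := Nat.pow_le_pow_right (by omega) hs
      _ = q := hq.symm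
  have hn0 : n ≠ 0 := by omega
  -- characteristic
  haveI hcharF : CharP F p := by
    obtain ⟨p', hchar⟩ := CharP.exists F
    haveI := hchar
    have hp' : p'.Prime := CharP.char_is_prime F p'
    obtain ⟨m, _, hm⟩ := FiniteField.card F p'
    have hdvd : p' ∣ p ^ (s * 2) := by
      rw [pow_mul, ← hq, ← hF, hm]
      exact dvd_pow_self p' m.2.ne'
    have : p' = p := by
      have := hp'.dvd_of_dvd_pow hdvd
      exact (Nat.prime_dvd_prime_iff_eq hp' hp).mp this
    subst this; exact hchar
  haveI hfact : Fact p.Prime := ⟨hp⟩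
  -- Frobenius facts
  have hqadd : ∀ x y : F, (x + y) ^ q = x ^ q + y ^ q := by
    intro x y; rw [hq]; exact add_pow_char_pow x y p s
  have hqsub : ∀ x y : F, (x - y) ^ q = x ^ q - y ^ q := by
    intro x y; rw [hq]; exact sub_pow_char_pow x y s
  have hq2 : ∀ x : F, (x ^ q) ^ q = x := by
    intro x
    rw [← pow_mul, ← sq, ← hF]
    exact FiniteField.pow_card x
  have hfc : ∀ X : F, f X = c * (X ^ q - X) ^ n := by
    intro X
    rw [hf X, hac]
    have h1 : n - 1 + 1 = n := by omega
    calc (c * X ^ q + -c * X) * (X ^ q - X) ^ (n - 1)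
        = c * ((X ^ q - X) ^ (n - 1) * (X ^ q - X)) := by ring
      _ = c * (X ^ q - X) ^ n := by rw [← pow_succ, h1]
  have hphineg : ∀ X : F, (X ^ q - X) ^ q = -(X ^ q - X) := by
    intro X
    rw [hqsub, hq2]
    ring
  -- f lands in the subfield
  have hfK : ∀ X : F, (f X) ^ q = f X := by
    intro X
    rw [hfc X, mul_pow, ← pow_mul, mul_comm n q, pow_mul, hphineg, hneven.neg_pow, hc]
  -- Part (i)
  have part1 : ∀ X : F, f (f X) = 0 := by
    intro X
    rw [hfc (f X), hfK X, sub_self, zero_pow hn0, mul_zero]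
  -- Part (ii) set equality
  have part2a : {X : F | f X = 0} = {X : F | X ^ q = X} := by
    ext X
    simp only [Set.mem_setOf_eq, hfc X, mul_eq_zero, pow_eq_zero_iff hn0, sub_eq_zero,
      or_iff_right hc0]
  -- additive map φ
  have hq0 : q ≠ 0 := by omega
  let φ : F →+ F :=
    { toFun := fun X => X ^ q - X
      map_zero' := by simp [zero_pow hq0]
      map_add' := fun x y => by show (x + y) ^ q - (x + y) = (x ^ q - x) + (y ^ q - y); rw [hqadd x y]; ring }
  have hφ : ∀ X : F, φ X = X ^ q - X := fun _ => rfl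
  set K : Set F := {x : F | x ^ q = x} with hK
  set S : Set F := {y : F | y ^ q = -y} with hS
  set R : Set F := Set.range (fun X : F => X ^ q - X) with hR
  have hker : (AddMonoidHom.ker φ : Set F) = K := by
    ext x
    simp [AddMonoidHom.mem_ker, hφ, sub_eq_zero, hK]
  have hrange : (AddMonoidHom.range φ : Set F) = R := by
    ext x
    simp [AddMonoidHom.mem_range, hφ, hR, Set.mem_range]
  have hRS : R ⊆ S := by
    rintro _ ⟨X, rfl⟩
    exact hphineg X
  have hKle : K.ncard ≤ q := by
    have h := aux_root_card_le F q (by omega) 1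
    have : K = {x : F | x ^ q = 1 * x} := by ext x; simp [hK]
    rw [this]; exact h
  have hSle : S.ncard ≤ q := by
    have h := aux_root_card_le F q (by omega) (-1)
    have : S = {x : F | x ^ q = -1 * x} := by ext x; simp [hS]
    rw [this]; exact h
  have hprod : K.ncard * R.ncard = q ^ 2 := by
    have h1 : Nat.card F = Nat.card (F ⧸ AddMonoidHom.ker φ) * Nat.card (AddMonoidHom.ker φ) :=
      AddSubgroup.card_eq_card_quotient_mul_card_addSubgroup _
    have h2 : Nat.card (F ⧸ AddMonoidHom.ker φ) = Nat.card (AddMonoidHom.range φ) :=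
      Nat.card_congr (QuotientAddGroup.quotientKerEquivRange φ).toEquiv
    have h3 : Nat.card (AddMonoidHom.ker φ) = K.ncard := by
      rw [← Nat.card_coe_set_eq, ← hker]; rfl
    have h4 : Nat.card (AddMonoidHom.range φ) = R.ncard := by
      rw [← Nat.card_coe_set_eq, ← hrange]; rfl
    have h5 : Nat.card F = q ^ 2 := by rw [Nat.card_eq_fintype_card, hF]
    rw [h1, h2, h3, h4] at h5
    rw [← h5, mul_comm]
  have hRle : R.ncard ≤ q := le_trans (Set.ncard_le_ncard hRS (Set.toFinite _)) hSle
  have hqpos : 0 < q := by omega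
  have hKq : K.ncard = q := by
    refine le_antisymm hKle ?_
    by_contra h
    push_neg at h
    have : K.ncard * R.ncard < q * q := by
      calc K.ncard * R.ncard ≤ K.ncard * q := Nat.mul_le_mul_left _ hRle
        _ < q * q := (Nat.mul_lt_mul_right hqpos).2 h
    rw [hprod, sq] at this
    omega
  have hRq : R.ncard = q := by
    have : q * R.ncard = q * q := by rw [← hKq, hprod, sq, hKq]
    exact Nat.eq_of_mul_eq_mul_left hqpos this
  have hRSeq : R = S := Set.eq_of_subset_of_ncard_le hRS (by rw [hRq]; exact hSle) (Set.toFinite _)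
  -- fibers of φ over S have exactly q elements
  have hfiberφ : ∀ y ∈ S, {X : F | X ^ q - X = y}.ncard = q := by
    intro y hy
    rw [← hRSeq] at hy
    obtain ⟨x₀, hx₀⟩ := hy
    simp only at hx₀
    have himg : {X : F | X ^ q - X = y} = (fun t => x₀ + t) '' K := by
      ext z
      simp only [Set.mem_setOf_eq, Set.mem_image, hK]
      constructor
      · intro hz
        refine ⟨z - x₀, ?_, by ring⟩
        show (z - x₀) ^ q = z - x₀
        rw [hqsub]
        linear_combination hz - hx₀
      · rintro ⟨t, ht, rfl⟩
        rw [hqadd]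
        linear_combination hx₀ + ht
    rw [himg, Set.ncard_image_of_injective _ (add_right_injective x₀), hKq]
  -- Part (ii) cardinality
  have part2b : {X : F | f X = 0}.ncard = q := by rw [part2a]; exact hKq
  -- Part (iii)
  have hgpos : 0 < Nat.gcd n (q - 1) := Nat.gcd_pos_of_pos_right n (by omega)
  set g : ℕ := Nat.gcd n (q - 1) with hgdef
  have hgdvdq1 : g ∣ q - 1 := Nat.gcd_dvd_right _ _
  have hgdvdn : g ∣ n := Nat.gcd_dvd_left _ _
  have hgcard : g ∣ Fintype.card F - 1 := by
    rw [hF]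
    refine hgdvdq1.trans ?_
    have := Nat.sub_dvd_pow_sub_pow q 1 2
    simpa using this
  have hU : {t : F | t ^ g = 1}.ncard = g := aux_nthroots_card F g hgpos hgcard
  have hUchar : ∀ t : F, t ^ g = 1 ↔ (t ^ q = t ∧ t ≠ 0 ∧ t ^ n = 1) := by
    intro t
    constructor
    · intro h
      have ht0 : t ≠ 0 := by
        rintro rfl
        rw [zero_pow hgpos.ne'] at h
        exact zero_ne_one h
      have hq1pow : t ^ (q - 1) = 1 := by
        obtain ⟨k, hk⟩ := hgdvdq1
        rw [hk, pow_mul, h, one_pow]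
      have htn : t ^ n = 1 := by
        obtain ⟨k, hk⟩ := hgdvdn
        rw [hk, pow_mul, h, one_pow]
      refine ⟨?_, ht0, htn⟩
      have h2 : t ^ (q - 1 + 1) = t := by rw [pow_succ, hq1pow, one_mul]
      rwa [Nat.sub_add_cancel (by omega)] at h2
    · rintro ⟨htq, ht0, htn⟩
      have hq1pow : t ^ (q - 1) = 1 := by
        have h1 : t ^ (q - 1) * t = 1 * t := by
          rw [← pow_succ, Nat.sub_add_cancel (by omega), htq, one_mul]
        exact mul_right_cancel₀ ht0 h1
      exact orderOf_dvd_iff_pow_eq_one.mp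
        (Nat.dvd_gcd (orderOf_dvd_of_pow_eq_one htn) (orderOf_dvd_of_pow_eq_one hq1pow))
  -- fibers of y ↦ c y^n on S \ {0}
  have hfiberT : ∀ y' : F, y' ^ q = -y' → y' ≠ 0 →
      {y : F | (y ^ q = -y ∧ y ≠ 0) ∧ c * y ^ n = c * y' ^ n}
        = (fun t => t * y') '' {t : F | t ^ g = 1} := by
    intro y' hy'q hy'0
    ext y
    simp only [Set.mem_setOf_eq, Set.mem_image]
    constructor
    · rintro ⟨⟨hyq, hy0⟩, hcy⟩
      refine ⟨y * y'⁻¹, (hUchar _).2 ⟨?_, mul_ne_zero hy0 (inv_ne_zero hy'0), ?_⟩, by field_simp⟩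
      · rw [mul_pow, inv_pow, hy'q, hyq, inv_neg]
        ring
      · have hyn : y ^ n = y' ^ n := mul_left_cancel₀ hc0 hcy
        rw [mul_pow, inv_pow, hyn, mul_inv_cancel₀ (pow_ne_zero n hy'0)]
    · rintro ⟨t, ht, rfl⟩
      obtain ⟨htq, ht0, htn⟩ := (hUchar t).1 ht
      refine ⟨⟨?_, mul_ne_zero ht0 hy'0⟩, ?_⟩
      · rw [mul_pow, htq, hy'q]; ring
      · rw [mul_pow, htn, one_mul]
  -- Finset machinery
  set ψ : F → F := fun y => c * y ^ n with hψdef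
  set I0f : Finset F := Finset.univ.filter (fun y => y ^ q = -y ∧ y ≠ 0) with hI0def
  set Vf : Finset F := I0f.image ψ with hVdef
  have hmemI0f : ∀ y : F, y ∈ I0f ↔ (y ^ q = -y ∧ y ≠ 0) := by
    intro y; simp [hI0def]
  have hTcard : ∀ α : F, ∀ y' ∈ I0f, ψ y' = α → (I0f.filter (fun y => ψ y = α)).card = g := by
    intro α y' hy' hψα
    obtain ⟨hy'q, hy'0⟩ := (hmemI0f y').1 hy'
    subst hψα
    have hcoe : (↑(I0f.filter (fun y => ψ y = ψ y')) : Set F)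
        = {y : F | (y ^ q = -y ∧ y ≠ 0) ∧ c * y ^ n = c * y' ^ n} := by
      ext y
      simp [hI0def, hψdef, and_assoc]
    rw [← Set.ncard_coe_finset, hcoe, hfiberT y' hy'q hy'0,
      Set.ncard_image_of_injective _ (mul_left_injective₀ hy'0), hU]
  have h0S : (0 : F) ∈ S := by simp [hS, zero_pow hq0]
  have hSq : S.ncard = q := by rw [← hRSeq]; exact hRq
  have hI0card : I0f.card = q - 1 := by
    have hcoe : (↑I0f : Set F) = S \ {0} := by
      ext y
      simp [hI0def, hS, Set.mem_diff]
    rw [← Set.ncard_coe_finset, hcoe, Set.ncard_diff_singleton_of_mem h0S, hSq]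
  have hVcount : q - 1 = Vf.card * g := by
    have hfib : I0f.card = ∑ α ∈ Vf, (I0f.filter (fun y => ψ y = α)).card :=
      Finset.card_eq_sum_card_fiberwise (fun y hy => Finset.mem_image_of_mem ψ hy)
    rw [hI0card] at hfib
    rw [hfib]
    rw [Finset.sum_congr rfl (fun α hα => by
      obtain ⟨y', hy', hψα⟩ := Finset.mem_image.1 hα
      exact hTcard α y' hy' hψα)]
    rw [Finset.sum_const, smul_eq_mul]
  have part3a : {α : F | α ≠ 0 ∧ (f ⁻¹' {α}).Nonempty}.ncard = (q - 1) / g := by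
    have hVset : {α : F | α ≠ 0 ∧ (f ⁻¹' {α}).Nonempty} = ↑Vf := by
      ext α
      simp only [Set.mem_setOf_eq, Finset.mem_coe]
      constructor
      · rintro ⟨hα0, X, hX⟩
        have hfX : f X = α := hX
        rw [hfc] at hfX
        have hy0 : X ^ q - X ≠ 0 := by
          intro h
          rw [h, zero_pow hn0, mul_zero] at hfX
          exact hα0 hfX.symm
        have hyI : X ^ q - X ∈ I0f := (hmemI0f _).2 ⟨hphineg X, hy0⟩
        rw [hVdef, Finset.mem_image]
        exact ⟨X ^ q - X, hyI, hfX⟩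
      · intro hα
        rw [hVdef, Finset.mem_image] at hα
        obtain ⟨y, hy, rfl⟩ := hα
        obtain ⟨hyq, hy0⟩ := (hmemI0f y).1 hy
        refine ⟨mul_ne_zero hc0 (pow_ne_zero _ hy0), ?_⟩
        have hyS : y ∈ S := hyq
        rw [← hRSeq] at hyS
        obtain ⟨X, hX⟩ := hyS
        simp only at hX
        refine ⟨X, ?_⟩
        show f X = ψ y
        rw [hfc, hX]
    rw [hVset, Set.ncard_coe_finset]
    exact (Nat.div_eq_of_eq_mul_left hgpos hVcount).symm
  refine ⟨part1, ⟨part2a, part2b⟩, part3a, ?_⟩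
  -- Part (iii) fiber sizes
  intro α hα0 hne
  obtain ⟨X₀, hX₀⟩ := hne
  have hfX₀ : f X₀ = α := hX₀
  set y' : F := X₀ ^ q - X₀ with hy'def
  have hψy' : ψ y' = α := by rw [hψdef]; rw [hfc] at hfX₀; exact hfX₀
  have hy'0 : y' ≠ 0 := by
    intro h
    apply hα0
    rw [← hψy', hψdef]
    simp [h, zero_pow hn0]
  have hy'I : y' ∈ I0f := (hmemI0f _).2 ⟨hphineg X₀, hy'0⟩
  set Pf : Finset F := Finset.univ.filter (fun X => f X = α) with hPdef
  set Tf : Finset F := I0f.filter (fun y => ψ y = α) with hTdef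
  have hTfcard : Tf.card = g := hTcard α y' hy'I hψy'
  have hmap : ∀ X ∈ Pf, (X ^ q - X) ∈ Tf := by
    intro Z hZ
    rw [hPdef, Finset.mem_filter] at hZ
    have hfZ : f Z = α := hZ.2
    rw [hfc] at hfZ
    have hz0 : Z ^ q - Z ≠ 0 := by
      intro h
      rw [h, zero_pow hn0, mul_zero] at hfZ
      exact hα0 hfZ.symm
    rw [hTdef, Finset.mem_filter]
    exact ⟨(hmemI0f _).2 ⟨hphineg Z, hz0⟩, hfZ⟩
  have hfib : Pf.card = ∑ y ∈ Tf, (Pf.filter (fun X => X ^ q - X = y)).card :=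
    Finset.card_eq_sum_card_fiberwise hmap
  have hfibval : ∀ y ∈ Tf, (Pf.filter (fun X => X ^ q - X = y)).card = q := by
    intro y hy
    rw [hTdef, Finset.mem_filter] at hy
    obtain ⟨hyI, hψy⟩ := hy
    obtain ⟨hyq, hy0⟩ := (hmemI0f y).1 hyI
    have heq : Pf.filter (fun X => X ^ q - X = y) = Finset.univ.filter (fun X => X ^ q - X = y) := by
      ext Z
      simp only [hPdef, Finset.mem_filter, Finset.mem_univ, true_and]
      constructor
      · exact fun h => h.2
      · intro h
        refine ⟨?_, h⟩
        rw [hfc, h]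
        exact hψy
    rw [heq, ← Set.ncard_coe_finset]
    have : (↑(Finset.univ.filter (fun X : F => X ^ q - X = y)) : Set F) = {X : F | X ^ q - X = y} := by
      ext Z; simp
    rw [this]
    exact hfiberφ y hyq
  have hsum : Pf.card = g * q := by
    rw [hfib, Finset.sum_congr rfl hfibval, Finset.sum_const, smul_eq_mul, hTfcard]
  have hpre : f ⁻¹' {α} = ↑Pf := by
    ext Z
    simp [hPdef]
  rw [hpre, Set.ncard_coe_finset, hsum, mul_comm]
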